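/- A groupoid (Q,·) is a commutative pentagonal quasigroup if and only if there exists an Abelian group (Q,+) of exponent 11 such that x·y = 6x + 6y for all x,y ∈ Q. -/
import Mathlib


/-- A pentagonal quasigroup: a quasigroup (unique left/right division)
satisfying idempotency, mediality and the pentagonal identity. -/
def IsPentagonal {Q : Type*} (m : Q → Q → Q) : Prop :=
  (∀ a b : Q, ∃! x, m a x = b) ∧
  (∀ a b : Q, ∃! x, m x a = b) ∧
  (∀ x, m x x = x) ∧
  (∀ x y z u, m (m x y) (m z u) = m (m x z) (m y u)) ∧
  (∀ x y, m (m (m (m x y) x) y) x = y)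

section Aux

variable {Q : Type*} [AddCommGroup Q]

theorem pent_red (h11 : ∀ x : Q, (11:ℕ)•x = 0) (n : ℕ) (x : Q) : n•x = (n % 11)•x := by
  conv_lhs => rw [← Nat.div_add_mod n 11]
  rw [add_nsmul, mul_nsmul, h11, smul_zero, zero_add]

theorem pent_redz (h11 : ∀ x : Q, (11:ℕ)•x = 0) (n : ℤ) (x : Q) : n•x = (n % 11)•x := by
  have h11z : (11:ℤ)•x = 0 := by
    have := natCast_zsmul x 11; norm_num at this; rw [this]; exact h11 x
  conv_lhs =>
    rw [← Int.mul_ediv_add_emod n 11, add_zsmul, mul_comm, mul_zsmul, h11z, smul_zero, zero_add]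

theorem pent_backward (h11 : ∀ x : Q, (11:ℕ)•x = 0) (m : Q → Q → Q)
    (hm : ∀ x y : Q, m x y = (6:ℕ)•x + (6:ℕ)•y) :
    IsPentagonal m ∧ ∀ x y : Q, m x y = m y x := by
  have h12 : ∀ z : Q, (12:ℕ)•z = z := by
    intro z; rw [pent_red h11 12 z]; norm_num
  have cancel6 : ∀ x y : Q, (6:ℕ)•x = (6:ℕ)•y → x = y := by
    intro x y h
    calc x = (12:ℕ)•x := (h12 x).symm
      _ = (2:ℕ)•((6:ℕ)•x) := by rw [smul_smul]; norm_num
      _ = (2:ℕ)•((6:ℕ)•y) := by rw [h]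
      _ = (12:ℕ)•y := by rw [smul_smul]; norm_num
      _ = y := h12 y
  refine ⟨⟨?_, ?_, ?_, ?_, ?_⟩, ?_⟩
  · intro a b
    have hex1 : m a ((2:ℕ)•b - a) = b := by
      rw [hm, nsmul_sub, smul_smul, show ((6:ℕ)*2) = 12 from rfl, h12 b]
      abel
    refine ⟨_, hex1, fun y hy => ?_⟩
    apply cancel6
    have h := hy.trans hex1.symm
    rw [hm, hm] at h
    exact add_left_cancel h
  · intro a b
    have hex1 : m ((2:ℕ)•b - a) a = b := by
      rw [hm, nsmul_sub, smul_smul, show ((6:ℕ)*2) = 12 from rfl, h12 b]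
      abel
    refine ⟨_, hex1, fun y hy => ?_⟩
    apply cancel6
    have h := hy.trans hex1.symm
    rw [hm, hm] at h
    exact add_right_cancel h
  · intro x
    rw [hm, ← add_nsmul]
    exact h12 x
  · intro x y z u
    simp only [hm, smul_add]
    abel
  · intro x y
    simp only [hm, smul_add, smul_smul]
    abel_nf
    rw [pent_redz h11 1518 x, pent_redz h11 1332 y]
    norm_num
  · intro x y
    rw [hm, hm, add_comm]

end Aux

theorem pent_forward {Q : Type*} [Nonempty Q] (m : Q → Q → Q)
    (hp : IsPentagonal m) (hc : ∀ x y : Q, m x y = m y x) :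
    ∃ _ : AddCommGroup Q,
      (∀ x : Q, (11:ℕ)•x = 0) ∧ (∀ x y : Q, m x y = (6:ℕ)•x + (6:ℕ)•y) := by
  classical
  obtain ⟨hL, hR, hI, hM, hP⟩ := hp
  obtain ⟨e⟩ := ‹Nonempty Q›
  have hex : ∀ b : Q, ∃! x, m x e = b := hR e
  let ρ : Q → Q := fun b => (hex b).choose
  have hρ : ∀ b, m (ρ b) e = b := fun b => (hex b).choose_spec.1
  have hρu : ∀ a b, m a e = b → a = ρ b := fun a b h => (hex b).choose_spec.2 a h
  have ρf : ∀ a, ρ (m a e) = a := fun a => (hρu a (m a e) rfl).symm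
  have ρe : ρ e = e := (hρu e e (hI e)).symm
  have ρm : ∀ x y, ρ (m x y) = m (ρ x) (ρ y) := by
    intro x y
    refine (hρu (m (ρ x) (ρ y)) (m x y) ?_).symm
    calc m (m (ρ x) (ρ y)) e = m (m (ρ x) (ρ y)) (m e e) := by rw [hI]
      _ = m (m (ρ x) e) (m (ρ y) e) := hM _ _ _ _
      _ = m x y := by rw [hρ, hρ]
  have hswap : ∀ a b c : Q, m (ρ (m (ρ a) (ρ b))) (ρ c) = m (ρ (m (ρ a) (ρ c))) (ρ b) := by
    intro a b c
    rw [ρm, ρm]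
    calc m (m (ρ (ρ a)) (ρ (ρ b))) (ρ c)
        = m (m (ρ (ρ a)) (ρ (ρ b))) (m (ρ (ρ c)) e) := by rw [hρ]
      _ = m (m (ρ (ρ a)) (ρ (ρ c))) (m (ρ (ρ b)) e) := hM _ _ _ _
      _ = m (m (ρ (ρ a)) (ρ (ρ c))) (ρ b) := by rw [hρ]
  have assoc' : ∀ a b c : Q, m (ρ (m (ρ a) (ρ b))) (ρ c) = m (ρ a) (ρ (m (ρ b) (ρ c))) := by
    intro a b c
    rw [hc (ρ a) (ρ (m (ρ b) (ρ c))), hswap b c a, hc (ρ b) (ρ a)]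
  have zadd' : ∀ x : Q, m (ρ e) (ρ x) = x := by
    intro x
    rw [ρe, hc]; exact hρ x
  have addz' : ∀ x : Q, m (ρ x) (ρ e) = x := by
    intro x
    rw [ρe]; exact hρ x
  have negc' : ∀ x : Q, m (ρ (m ((hL (ρ x) e).choose) e)) (ρ x) = e := by
    intro x
    rw [ρf, hc]
    exact (hL (ρ x) e).choose_spec.1
  letI : Zero Q := ⟨e⟩
  letI : Add Q := ⟨fun x y => m (ρ x) (ρ y)⟩
  letI : Neg Q := ⟨fun x => m ((hL (ρ x) e).choose) e⟩
  letI G : AddCommGroup Q :=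
  { add := (· + ·)
    zero := 0
    neg := Neg.neg
    add_assoc := assoc'
    zero_add := zadd'
    add_zero := addz'
    add_comm := fun a b => hc _ _
    neg_add_cancel := negc'
    nsmul := nsmulRec
    zsmul := zsmulRec }
  have hadd : ∀ x y : Q, x + y = m (ρ x) (ρ y) := fun _ _ => rfl
  have dbl : ∀ z : Q, ρ z = z + z := fun z => (hI (ρ z)).symm
  have hmadd : ∀ x y : Q, m x y = m x e + m y e := by
    intro x y
    rw [hadd, ρf, ρf]
  have hfadd : ∀ a b : Q, m (a + b) e = m a e + m b e := by
    intro a b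
    rw [hadd a b]
    calc m (m (ρ a) (ρ b)) e = m (m (ρ a) (ρ b)) (m e e) := by rw [hI]
      _ = m (m (ρ a) e) (m (ρ b) e) := hM _ _ _ _
      _ = m a b := by rw [hρ, hρ]
      _ = m a e + m b e := hmadd a b
  have E2 : ∀ y : Q, m (m (m (m y e) e) e) e + m (m y e) e = y := by
    intro y
    have h := hP e y
    rw [hc e y] at h
    rw [hmadd (m (m y e) e) y] at h
    rw [hfadd (m (m (m y e) e) e) (m y e)] at h
    exact h
  have ρadd : ∀ a b : Q, ρ (a + b) = ρ a + ρ b := by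
    intro a b
    rw [dbl (a + b), dbl a, dbl b]
    abel
  have key : ∀ y : Q, y + ρ (ρ y) = ρ (ρ (ρ (ρ y))) := by
    intro y
    have h1 := congrArg ρ (E2 y)
    simp only [ρadd, ρf] at h1
    have h2 := congrArg ρ h1
    simp only [ρadd, ρf] at h2
    have h3 := congrArg ρ h2
    simp only [ρadd, ρf] at h3
    have h4 := congrArg ρ h3
    simp only [ρadd, ρf] at h4
    exact h4
  have h12 : ∀ z : Q, ρ z = (2:ℕ)•z := by
    intro z
    rw [dbl z, two_nsmul]
  have h11 : ∀ y : Q, (11:ℕ)•y = 0 := by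
    intro y
    have h16 : (16:ℕ)•y = (5:ℕ)•y := by
      calc (16:ℕ)•y = ρ (ρ (ρ (ρ y))) := by
            simp only [h12, smul_smul]; norm_num
        _ = y + ρ (ρ y) := (key y).symm
        _ = (5:ℕ)•y := by
            simp only [h12, smul_smul]; norm_num
            abel
    have h' : (11:ℕ)•y + (5:ℕ)•y = (0:Q) + (5:ℕ)•y := by
      rw [zero_add, ← add_nsmul]
      exact h16
    exact add_right_cancel h'
  have hf6 : ∀ x : Q, m x e = (6:ℕ)•x := by
    intro x
    have hρ6 : ρ ((6:ℕ)•x) = x := by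
      rw [h12, smul_smul, show ((2:ℕ)*6) = 11 + 1 from rfl, add_nsmul, h11, zero_add, one_nsmul]
    calc m x e = m (ρ ((6:ℕ)•x)) e := by rw [hρ6]
      _ = (6:ℕ)•x := hρ _
  refine ⟨G, h11, ?_⟩
  intro x y
  rw [hmadd, hf6, hf6]

theorem commutative_pentagonal_characterization (Q : Type*) [Nonempty Q]
    (m : Q → Q → Q) :
    (IsPentagonal m ∧ ∀ x y : Q, m x y = m y x) ↔
      ∃ _ : AddCommGroup Q,
        (∀ x : Q, (11 : ℕ) • x = 0) ∧
        (∀ x y : Q, m x y = (6 : ℕ) • x + (6 : ℕ) • y) := by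
  constructor
  · rintro ⟨hp, hc⟩
    exact pent_forward m hp hc
  · rintro ⟨G, h11, hm⟩
    exact pent_backward h11 m hm
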